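/- Let T be a bounded operator that is A-self-adjoint, i.e. AT = T*A, and admits an A-adjoint (there exists a bounded W with AW = T*A), let q ∈ D, and suppose the range of A has dimension at least 2. Then |q|·‖T‖_A ≤ w_{q,A}(T) ≤ ‖T‖_A, where ‖T‖_A = sup{‖Tx‖_A : x ∈ H, ‖x‖_A ≤ 1}. -/

import Mathlib

set_option maxHeartbeats 2000000
set_option synthInstance.maxHeartbeats 1000000

noncomputable section

open Filter

open scoped InnerProductSpace

variable {H : Type*} [NormedAddCommGroup H] [InnerProductSpace ℂ H] [CompleteSpace H]

/-- The paper's semi-inner product `⟨x, y⟩_A = ⟨A x, y⟩`, where the inner product of the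
paper is linear in the *first* argument; in Mathlib's convention this is `⟪y, A x⟫_ℂ`. -/
def sipA (A : H →L[ℂ] H) (x y : H) : ℂ := inner ℂ y (A x)

/-- The `A`-seminorm `‖x‖_A = ⟨A x, x⟩ ^ (1/2)`. -/
def semiNormA (A : H →L[ℂ] H) (x : H) : ℝ := Real.sqrt (sipA A x x).re

/-- The `A`-`q`-numerical range `W_{q,A}(T)`. -/
def WqA (A : H →L[ℂ] H) (q : ℂ) (T : H →L[ℂ] H) : Set ℂ :=
  {z | ∃ x y : H, semiNormA A x = 1 ∧ semiNormA A y = 1 ∧ sipA A x y = q ∧ z = sipA A (T x) y}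

/-- The `A`-`q`-numerical radius `w_{q,A}(T)`. -/
def wqA (A : H →L[ℂ] H) (q : ℂ) (T : H →L[ℂ] H) : ℝ := sSup ((‖·‖) '' WqA A q T)

/-- The `A`-operator seminorm `‖T‖_A = sup {‖T x‖_A : ‖x‖_A ≤ 1}`. -/
def opNormA (A T : H →L[ℂ] H) : ℝ :=
  sSup ((fun x => semiNormA A (T x)) '' {x : H | semiNormA A x ≤ 1})

/-- `T` is `A`-bounded: `‖T x‖_A ≤ c ‖x‖_A` for some `c > 0`. -/
def ABounded (A T : H →L[ℂ] H) : Prop := ∃ c > 0, ∀ x : H, semiNormA A (T x) ≤ c * semiNormA A x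

private lemma aux_ratio {a d K : ℝ} (ha : 0 ≤ a) (hd : 0 ≤ d)
    (h : ∀ n : ℕ, a ^ (2 ^ n) ≤ K * d ^ (2 ^ n)) : a ≤ d := by
  by_contra hcon
  push_neg at hcon
  rcases eq_or_lt_of_le hd with hd0 | hd0
  · have h0 := h 0
    simp [← hd0] at h0
    nlinarith
  · have hr : 1 < a / d := (one_lt_div hd0).2 hcon
    obtain ⟨n, hn⟩ := pow_unbounded_of_one_lt K hr
    have h2 : (a / d) ^ n ≤ (a / d) ^ (2 ^ n) :=
      pow_le_pow_right₀ hr.le (Nat.le_of_lt (Nat.lt_two_pow_self))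
    have h3 : (a / d) ^ (2 ^ n) ≤ K := by
      rw [div_pow, div_le_iff₀ (by positivity)]
      exact h n
    linarith

theorem stmt_11 (A : H →L[ℂ] H) (hA : A.IsPositive)
    (hrank : 2 ≤ Module.rank ℂ (LinearMap.range A.toLinearMap))
    (T : H →L[ℂ] H)
    (hsa : A.comp T = (ContinuousLinearMap.adjoint T).comp A)
    (hadj : ∃ W : H →L[ℂ] H, A.comp W = (ContinuousLinearMap.adjoint T).comp A)
    (q : ℂ) (hq : ‖q‖ ≤ 1) :
    ‖q‖ * opNormA A T ≤ wqA A q T ∧ wqA A q T ≤ opNormA A T := by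
  classical
  clear hadj
  have hApos : (0 : H →L[ℂ] H) ≤ A := (ContinuousLinearMap.nonneg_iff_isPositive A).2 hA
  set R : H →L[ℂ] H := CFC.sqrt A with hRdef
  have hRR : R * R = A := CFC.sqrt_mul_sqrt_self A hApos
  have hRsa : IsSelfAdjoint R := (CFC.sqrt_nonneg (a := A)).isSelfAdjoint
  have hRadj : ContinuousLinearMap.adjoint R = R := by
    rw [← ContinuousLinearMap.star_eq_adjoint]; exact hRsa
  have hattA : ∀ w : H, A w = R (R w) := by
    intro w; rw [← hRR]; rfl
  have hinner : ∀ a b : H, (⟪R a, R b⟫_ℂ) = ⟪a, A b⟫_ℂ := by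
    intro a b
    calc (⟪R a, R b⟫_ℂ) = ⟪ContinuousLinearMap.adjoint R a, R b⟫_ℂ := by rw [hRadj]
      _ = ⟪a, R (R b)⟫_ℂ := ContinuousLinearMap.adjoint_inner_left R (R b) a
      _ = ⟪a, A b⟫_ℂ := by rw [← hattA]
  have hsip : ∀ x y : H, sipA A x y = ⟪R y, R x⟫_ℂ := fun x y => (hinner y x).symm
  have hnorm : ∀ x : H, semiNormA A x = ‖R x‖ := by
    intro x
    rw [semiNormA, hsip]
    have h1 : (⟪R x, R x⟫_ℂ).re = ‖R x‖ ^ 2 := by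
      have := inner_self_eq_norm_sq (𝕜 := ℂ) (R x)
      simpa using this
    rw [h1, Real.sqrt_sq (norm_nonneg _)]
  have hsaApp : ∀ w : H, A (T w) = ContinuousLinearMap.adjoint T (A w) := by
    intro w
    have := ContinuousLinearMap.ext_iff.mp hsa w
    simpa using this
  have hRT0 : ∀ x : H, R x = 0 → R (T x) = 0 := by
    intro x hx
    have hAx : A x = 0 := by rw [hattA, hx, map_zero]
    have h0 : (⟪R (T x), R (T x)⟫_ℂ) = 0 := by
      rw [hinner, hsaApp, hAx, map_zero, inner_zero_right]
    exact inner_self_eq_zero.mp h0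
  have hpow : ∀ (k : ℕ) (w : H),
      A ((T ^ k) w) = ((ContinuousLinearMap.adjoint T) ^ k) (A w) := by
    intro k
    induction k with
    | zero => intro w; simp
    | succ n ih =>
      intro w
      rw [pow_succ, pow_succ]
      simp only [ContinuousLinearMap.mul_apply]
      rw [ih (T w), hsaApp w]
  have hadjpow : ∀ (k : ℕ) (u w : H),
      (⟪u, ((ContinuousLinearMap.adjoint T) ^ k) w⟫_ℂ) = ⟪(T ^ k) u, w⟫_ℂ := by
    intro k u w
    have hp : (ContinuousLinearMap.adjoint T) ^ k = ContinuousLinearMap.adjoint (T ^ k) := by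
      rw [← ContinuousLinearMap.star_eq_adjoint, ← ContinuousLinearMap.star_eq_adjoint, ← star_pow]
    rw [hp]
    exact ContinuousLinearMap.adjoint_inner_right (T ^ k) u w
  have hk : ∀ (k : ℕ) (x : H),
      ‖R ((T ^ k) x)‖ ^ 2 ≤ ‖R ((T ^ (2 * k)) x)‖ * ‖R x‖ := by
    intro k x
    have h1 : ‖R ((T ^ k) x)‖ ^ 2 = (⟪R ((T ^ k) x), R ((T ^ k) x)⟫_ℂ).re := by
      have := inner_self_eq_norm_sq (𝕜 := ℂ) (R ((T ^ k) x))
      simpa using this.symm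
    have h2 : (⟪R ((T ^ k) x), R ((T ^ k) x)⟫_ℂ) = ⟪R ((T ^ (2 * k)) x), R x⟫_ℂ := by
      rw [hinner, hpow, hadjpow, hinner]
      congr 1
      rw [two_mul, pow_add]
      rfl
    rw [h1, h2]
    have h3 : (⟪R ((T ^ (2 * k)) x), R x⟫_ℂ).re ≤ ‖R ((T ^ (2 * k)) x)‖ * ‖R x‖ := by
      have := re_inner_le_norm (𝕜 := ℂ) (R ((T ^ (2 * k)) x)) (R x)
      simpa using this
    exact h3
  have hQ : ∀ (n : ℕ) (x : H),
      ‖R (T x)‖ ^ (2 ^ n) ≤ ‖R ((T ^ (2 ^ n)) x)‖ * ‖R x‖ ^ (2 ^ n - 1) := by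
    intro n x
    induction n with
    | zero => simp
    | succ m ih =>
      have hm1 : (1 : ℕ) ≤ 2 ^ m := Nat.one_le_two_pow
      have e1 : 2 ^ (m + 1) = 2 ^ m * 2 := by rw [pow_succ]
      have e2 : 2 ^ (m + 1) - 1 = (2 ^ m - 1) * 2 + 1 := by omega
      calc ‖R (T x)‖ ^ 2 ^ (m + 1) = (‖R (T x)‖ ^ 2 ^ m) ^ 2 := by
            rw [e1, pow_mul]
        _ ≤ (‖R ((T ^ (2 ^ m)) x)‖ * ‖R x‖ ^ (2 ^ m - 1)) ^ 2 := by
            exact pow_le_pow_left₀ (by positivity) ih 2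
        _ = ‖R ((T ^ (2 ^ m)) x)‖ ^ 2 * (‖R x‖ ^ (2 ^ m - 1)) ^ 2 := by ring
        _ ≤ (‖R ((T ^ (2 * 2 ^ m)) x)‖ * ‖R x‖) * (‖R x‖ ^ (2 ^ m - 1)) ^ 2 := by
            exact mul_le_mul_of_nonneg_right (hk (2 ^ m) x) (by positivity)
        _ = ‖R ((T ^ (2 ^ (m + 1))) x)‖ * ‖R x‖ ^ (2 ^ (m + 1) - 1) := by
            rw [show 2 * 2 ^ m = 2 ^ (m + 1) by rw [e1]; ring, e2]
            rw [pow_add, pow_mul, pow_one]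
            ring
  have hRTle : ∀ x : H, ‖R (T x)‖ ≤ ‖T‖ * ‖R x‖ := by
    intro x
    rcases eq_or_ne (R x) 0 with h0 | h0
    · rw [hRT0 x h0, h0]
      simp
    · have hb : 0 < ‖R x‖ := norm_pos_iff.2 h0
      apply aux_ratio (K := ‖R‖ * ‖x‖ / ‖R x‖) (norm_nonneg _) (by positivity)
      intro n
      have h2 : ‖R ((T ^ (2 ^ n)) x)‖ ≤ ‖R‖ * (‖T‖ ^ (2 ^ n) * ‖x‖) := by
        calc ‖R ((T ^ (2 ^ n)) x)‖ ≤ ‖R‖ * ‖(T ^ (2 ^ n)) x‖ :=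
              ContinuousLinearMap.le_opNorm R _
          _ ≤ ‖R‖ * (‖T ^ (2 ^ n)‖ * ‖x‖) := by
              exact mul_le_mul_of_nonneg_left (ContinuousLinearMap.le_opNorm _ x) (norm_nonneg R)
          _ ≤ ‖R‖ * (‖T‖ ^ (2 ^ n) * ‖x‖) := by
              have := norm_pow_le' T (by positivity : 0 < 2 ^ n)
              gcongr
      calc ‖R (T x)‖ ^ (2 ^ n) ≤ ‖R ((T ^ (2 ^ n)) x)‖ * ‖R x‖ ^ (2 ^ n - 1) := hQ n x
        _ ≤ (‖R‖ * (‖T‖ ^ (2 ^ n) * ‖x‖)) * ‖R x‖ ^ (2 ^ n - 1) := by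
            exact mul_le_mul_of_nonneg_right h2 (by positivity)
        _ = ‖R‖ * ‖x‖ / ‖R x‖ * (‖T‖ * ‖R x‖) ^ (2 ^ n) := by
            rw [pow_sub₀ _ hb.ne' Nat.one_le_two_pow, mul_pow]
            field_simp
  -- Cauchy-Schwarz for the semi-inner product
  have hCS : ∀ a b : H, ‖sipA A a b‖ ≤ ‖R a‖ * ‖R b‖ := by
    intro a b
    rw [hsip]
    calc ‖⟪R b, R a⟫_ℂ‖ = ‖(⟪R b, R a⟫_ℂ)‖ := rfl
      _ ≤ ‖R b‖ * ‖R a‖ := norm_inner_le_norm _ _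
      _ = ‖R a‖ * ‖R b‖ := mul_comm _ _
  have hTnn : (0 : ℝ) ≤ ‖T‖ := norm_nonneg T
  -- the operator-seminorm sup set
  have hSopBdd : BddAbove ((fun x => semiNormA A (T x)) '' {x : H | semiNormA A x ≤ 1}) := by
    refine ⟨‖T‖, ?_⟩
    rintro r ⟨x, hx, rfl⟩
    simp only [Set.mem_setOf_eq, hnorm] at hx ⊢
    calc ‖R (T x)‖ ≤ ‖T‖ * ‖R x‖ := hRTle x
      _ ≤ ‖T‖ * 1 := by gcongr
      _ = ‖T‖ := mul_one _
  have hSop0 : (0 : ℝ) ≤ opNormA A T := by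
    have hmem : semiNormA A (T 0) ∈ (fun x => semiNormA A (T x)) '' {x : H | semiNormA A x ≤ 1} := by
      refine ⟨0, ?_, rfl⟩
      simp only [Set.mem_setOf_eq, hnorm, map_zero, norm_zero]
      norm_num
    have h1 : semiNormA A (T 0) ≤ opNormA A T := le_csSup hSopBdd hmem
    have h2 : semiNormA A (T 0) = 0 := by simp [hnorm]
    linarith
  have hWbdd : BddAbove ((‖·‖) '' WqA A q T) := by
    refine ⟨‖T‖, ?_⟩
    rintro r ⟨z, ⟨x, y, hx, hy, hxy, rfl⟩, rfl⟩
    rw [hnorm] at hx hy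
    calc ‖sipA A (T x) y‖ ≤ ‖R (T x)‖ * ‖R y‖ := hCS _ _
      _ ≤ (‖T‖ * ‖R x‖) * ‖R y‖ := by
          exact mul_le_mul_of_nonneg_right (hRTle x) (norm_nonneg _)
      _ = ‖T‖ := by rw [hx, hy]; ring
  have hwnn : (0 : ℝ) ≤ wqA A q T := by
    apply Real.sSup_nonneg
    rintro r ⟨z, _, rfl⟩
    exact norm_nonneg z
  -- upper bound
  have hupper : wqA A q T ≤ opNormA A T := by
    apply Real.sSup_le _ hSop0
    rintro r ⟨z, ⟨x, y, hx, hy, hxy, rfl⟩, rfl⟩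
    have hx' : ‖R x‖ = 1 := by rw [← hnorm]; exact hx
    have hy' : ‖R y‖ = 1 := by rw [← hnorm]; exact hy
    calc ‖sipA A (T x) y‖ ≤ ‖R (T x)‖ * ‖R y‖ := hCS _ _
      _ = semiNormA A (T x) := by rw [hy', mul_one, hnorm]
      _ ≤ opNormA A T := le_csSup hSopBdd ⟨x, le_of_eq hx, rfl⟩
  refine ⟨?_, hupper⟩
  -- lower bound
  have hspan : ∀ w : H, ∃ v : H, A v ∉ Submodule.span ℂ ({w} : Set H) := by
    intro w
    by_contra hcon
    push_neg at hcon
    have hle : LinearMap.range A.toLinearMap ≤ Submodule.span ℂ ({w} : Set H) := by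
      rintro _ ⟨v, rfl⟩
      exact hcon v
    have h1 : Module.rank ℂ (LinearMap.range A.toLinearMap) ≤
        Module.rank ℂ (Submodule.span ℂ ({w} : Set H)) := Submodule.rank_mono hle
    have h2 : Module.rank ℂ (Submodule.span ℂ ({w} : Set H)) ≤ 1 := by
      simpa using rank_span_le (R := ℂ) ({w} : Set H)
    have h3 : (2 : Cardinal) ≤ 1 := hrank.trans (h1.trans h2)
    exact absurd h3 (by norm_num)
  have hscale : ∀ w : H, R w ≠ 0 → ‖R (((‖R w‖ : ℂ))⁻¹ • w)‖ = 1 := by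
    intro w hw
    rw [map_smul, norm_smul, norm_inv, Complex.norm_real, Real.norm_eq_abs, abs_of_nonneg (norm_nonneg _)]
    exact inv_mul_cancel₀ (norm_ne_zero_iff.2 hw)
  have hRne : ∀ w : H, A w ≠ 0 → R w ≠ 0 := by
    intro w hw h0
    exact hw (by rw [hattA, h0, map_zero])
  have hUnit : ∃ u : H, ‖R u‖ = 1 := by
    obtain ⟨v, hv⟩ := hspan 0
    have hv' : A v ≠ 0 := by
      intro h0
      apply hv
      rw [h0]
      exact Submodule.zero_mem _
    exact ⟨_, hscale v (hRne v hv')⟩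
  have hGS : ∀ u : H, ‖R u‖ = 1 → ∃ p : H, ‖R p‖ = 1 ∧ (⟪R u, R p⟫_ℂ) = 0 := by
    intro u hu
    obtain ⟨v, hv⟩ := hspan (A u)
    have huu : (⟪R u, R u⟫_ℂ) = 1 := by
      rw [inner_self_eq_norm_sq_to_K, hu]
      norm_num
    set c : ℂ := ⟪R u, R v⟫_ℂ with hc
    set p0 : H := v - c • u with hp0
    have hip : (⟪R u, R p0⟫_ℂ) = 0 := by
      rw [hp0, map_sub, map_smul, inner_sub_right, inner_smul_right, huu, mul_one, ← hc,
        sub_self]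
    have hp0ne : R p0 ≠ 0 := by
      intro h0
      apply hv
      have hA0 : A p0 = 0 := by rw [hattA, h0, map_zero]
      have hAv : A v = c • A u := by
        have : A v - c • A u = 0 := by
          rw [← map_smul, ← map_sub, ← hp0, hA0]
        exact sub_eq_zero.mp this
      rw [hAv]
      exact Submodule.smul_mem _ _ (Submodule.mem_span_singleton_self _)
    refine ⟨((‖R p0‖ : ℂ))⁻¹ • p0, hscale p0 hp0ne, ?_⟩
    rw [map_smul, inner_smul_right, hip, mul_zero]
  set SA : Set ℝ := (fun u => ‖sipA A (T u) u‖) '' {u : H | ‖R u‖ = 1} with hSAdef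
  have hSAbdd : BddAbove SA := by
    refine ⟨‖T‖, ?_⟩
    rintro r ⟨u, hu, rfl⟩
    simp only [Set.mem_setOf_eq] at hu
    calc ‖sipA A (T u) u‖ ≤ ‖R (T u)‖ * ‖R u‖ := hCS _ _
      _ ≤ (‖T‖ * ‖R u‖) * ‖R u‖ := mul_le_mul_of_nonneg_right (hRTle u) (norm_nonneg _)
      _ = ‖T‖ := by rw [hu]; ring
  set wA : ℝ := sSup SA with hwAdef
  have hwAnn : (0 : ℝ) ≤ wA := by
    apply Real.sSup_nonneg
    rintro r ⟨u, hu, rfl⟩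
    exact norm_nonneg _
  have hB : ∀ w : H, ‖sipA A (T w) w‖ ≤ wA * ‖R w‖ ^ 2 := by
    intro w
    rcases eq_or_ne (R w) 0 with h0 | h0
    · have hz : sipA A (T w) w = 0 := by
        rw [hsip, h0, inner_zero_left]
      rw [hz, norm_zero]
      exact mul_nonneg hwAnn (by positivity)
    · have hwpos : 0 < ‖R w‖ := norm_pos_iff.2 h0
      set u : H := ((‖R w‖ : ℂ))⁻¹ • w with hudef
      have hu : ‖R u‖ = 1 := hscale w h0
      have hmem : ‖sipA A (T u) u‖ ∈ SA := ⟨u, hu, rfl⟩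
      have hle : ‖sipA A (T u) u‖ ≤ wA := le_csSup hSAbdd hmem
      have key : sipA A (T u) u =
          (((‖R w‖ : ℂ))⁻¹ * ((‖R w‖ : ℂ))⁻¹) * sipA A (T w) w := by
        rw [hsip, hudef]
        rw [map_smul, map_smul, map_smul, inner_smul_left, inner_smul_right, map_inv₀,
          Complex.conj_ofReal, ← hsip]
        ring
      have habs : ‖sipA A (T u) u‖ =
          (‖R w‖ ^ 2)⁻¹ * ‖sipA A (T w) w‖ := by
        rw [key, norm_mul, norm_mul, norm_inv, Complex.norm_real, Real.norm_eq_abs,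
          abs_of_nonneg (norm_nonneg _)]
        ring
      rw [habs] at hle
      calc ‖sipA A (T w) w‖
          = ‖R w‖ ^ 2 * ((‖R w‖ ^ 2)⁻¹ * ‖sipA A (T w) w‖) := by
            field_simp
        _ ≤ ‖R w‖ ^ 2 * wA := mul_le_mul_of_nonneg_left hle (by positivity)
        _ = wA * ‖R w‖ ^ 2 := mul_comm _ _
  have hswap : ∀ a b : H, sipA A (T b) a = (starRingEnd ℂ) (sipA A (T a) b) := by
    intro a b
    rw [hsip, hsip, ← inner_conj_symm]
    congr 1
    rw [hinner, hinner, hsaApp]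
    exact (ContinuousLinearMap.adjoint_inner_right T b (A a)).symm
  have hRePolar : ∀ a b : H, ‖R a‖ = 1 → ‖R b‖ = 1 → (sipA A (T a) b).re ≤ wA := by
    intro a b ha hb
    have expand : sipA A (T (a + b)) (a + b) - sipA A (T (a - b)) (a - b) =
        ((4 * (sipA A (T a) b).re : ℝ) : ℂ) := by
      have h1 : sipA A (T a) b + sipA A (T b) a = ((2 * (sipA A (T a) b).re : ℝ) : ℂ) := by
        rw [hswap a b]
        exact Complex.add_conj _
      have h2 : sipA A (T (a + b)) (a + b) - sipA A (T (a - b)) (a - b) =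
          2 * (sipA A (T a) b + sipA A (T b) a) := by
        simp only [hsip, map_add, map_sub, inner_add_left, inner_add_right,
          inner_sub_left, inner_sub_right]
        ring
      rw [h2, h1]
      push_cast
      ring
    have hpar : ‖R (a + b)‖ ^ 2 + ‖R (a - b)‖ ^ 2 = 4 := by
      rw [map_add, map_sub]
      have h3 := norm_add_sq (𝕜 := ℂ) (R a) (R b)
      have h4 := norm_sub_sq (𝕜 := ℂ) (R a) (R b)
      rw [ha, hb] at h3 h4
      rw [h3, h4]
      ring
    have hb1 := hB (a + b)
    have hb2 := hB (a - b)
    have hre : 4 * (sipA A (T a) b).re ≤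
        ‖sipA A (T (a + b)) (a + b)‖ + ‖sipA A (T (a - b)) (a - b)‖ := by
      have h5 : (4 * (sipA A (T a) b).re : ℝ) =
          (sipA A (T (a + b)) (a + b) - sipA A (T (a - b)) (a - b)).re := by
        rw [expand, Complex.ofReal_re]
      rw [h5]
      calc (sipA A (T (a + b)) (a + b) - sipA A (T (a - b)) (a - b)).re
          ≤ ‖sipA A (T (a + b)) (a + b) - sipA A (T (a - b)) (a - b)‖ :=
            Complex.re_le_norm _
        _ ≤ _ := by
            have := norm_add_le (sipA A (T (a + b)) (a + b)) (-(sipA A (T (a - b)) (a - b)))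
            simpa [sub_eq_add_neg] using this
    have : 4 * (sipA A (T a) b).re ≤ wA * (‖R (a + b)‖ ^ 2 + ‖R (a - b)‖ ^ 2) := by
      calc 4 * (sipA A (T a) b).re ≤ _ := hre
        _ ≤ wA * ‖R (a + b)‖ ^ 2 + wA * ‖R (a - b)‖ ^ 2 := add_le_add hb1 hb2
        _ = wA * (‖R (a + b)‖ ^ 2 + ‖R (a - b)‖ ^ 2) := by ring
    rw [hpar] at this
    linarith
  have hAbs : ∀ a b : H, ‖R a‖ = 1 → ‖R b‖ = 1 → ‖sipA A (T a) b‖ ≤ wA := by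
    intro a b ha hb
    rcases eq_or_ne (sipA A (T a) b) 0 with h0 | h0
    · rw [h0, norm_zero]; exact hwAnn
    · set z : ℂ := sipA A (T a) b with hz
      set d : ℂ := z / (‖z‖ : ℝ) with hd
      have habsz : (0 : ℝ) < ‖z‖ := (norm_pos_iff.2 h0)
      have hdabs : ‖d‖ = 1 := by
        rw [hd, norm_div, Complex.norm_real, Real.norm_eq_abs, abs_of_nonneg (norm_nonneg z),
          div_self habsz.ne']
      have hb' : ‖R (d • b)‖ = 1 := by
        rw [map_smul, norm_smul, hb, mul_one]
        exact hdabs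
      have hzval : sipA A (T a) (d • b) = ((‖z‖ : ℝ) : ℂ) := by
        rw [hsip, map_smul, inner_smul_left, ← hsip, ← hz]
        rw [hd, map_div₀, Complex.conj_ofReal]
        have hcz : (starRingEnd ℂ) z * z = ((‖z‖ : ℝ) : ℂ) ^ 2 := by
          rw [mul_comm, Complex.mul_conj, ← Complex.sq_norm]
          push_cast
          ring
        rw [div_mul_eq_mul_div, hcz]
        have hne : ((‖z‖ : ℝ) : ℂ) ≠ 0 := by exact_mod_cast habsz.ne'
        field_simp
      have := hRePolar a (d • b) ha hb'
      rw [hzval, Complex.ofReal_re] at this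
      exact this
  have hw_le : ∀ x : H, ‖R x‖ ≤ 1 → ‖R (T x)‖ ≤ wA := by
    intro x hx
    rcases eq_or_ne (R (T x)) 0 with h0 | h0
    · rw [h0, norm_zero]; exact hwAnn
    · have hRx : R x ≠ 0 := fun h => h0 (hRT0 x h)
      have hxpos : 0 < ‖R x‖ := norm_pos_iff.2 hRx
      have htpos : 0 < ‖R (T x)‖ := norm_pos_iff.2 h0
      set u : H := ((‖R x‖ : ℂ))⁻¹ • x with hudef
      set v : H := ((‖R (T x)‖ : ℂ))⁻¹ • (T x) with hvdef
      have hu : ‖R u‖ = 1 := hscale x hRx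
      have hv : ‖R v‖ = 1 := hscale (T x) h0
      have hval : ‖sipA A (T u) v‖ = ‖R (T x)‖ / ‖R x‖ := by
        rw [hsip, hudef, hvdef]
        rw [map_smul, map_smul, map_smul, inner_smul_left, inner_smul_right, map_inv₀,
          Complex.conj_ofReal, inner_self_eq_norm_sq_to_K]
        simp only [norm_mul, norm_inv, norm_pow, Complex.norm_conj, map_mul, map_inv₀, map_pow, Complex.norm_real, Real.norm_eq_abs, RCLike.norm_ofReal,
          abs_of_nonneg (norm_nonneg _)]
        field_simp
      have h1 : ‖R (T x)‖ ≤ ‖R (T x)‖ / ‖R x‖ := by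
        rw [le_div_iff₀ hxpos]
        nlinarith
      calc ‖R (T x)‖ ≤ ‖R (T x)‖ / ‖R x‖ := h1
        _ = ‖sipA A (T u) v‖ := hval.symm
        _ ≤ wA := hAbs u v hu hv
  have hmain2 : ∀ u : H, ‖R u‖ = 1 →
      ‖q‖ * ‖sipA A (T u) u‖ ≤ wqA A q T := by
    intro u hu
    obtain ⟨p, hp, hup⟩ := hGS u hu
    set s : ℝ := Real.sqrt (1 - ‖q‖ ^ 2) with hsdef
    have hq2 : ‖q‖ ^ 2 ≤ 1 := by nlinarith [norm_nonneg q]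
    have hs2 : s ^ 2 = 1 - ‖q‖ ^ 2 := Real.sq_sqrt (by linarith)
    have hsnn : 0 ≤ s := Real.sqrt_nonneg _
    set α : ℂ := q * sipA A (T u) u with hα
    set β : ℂ := sipA A (T u) p with hβ
    set sga : ℂ := if α = 0 then 1 else α / (‖α‖ : ℝ) with hsga
    set sgb : ℂ := if β = 0 then 1 else β / (‖β‖ : ℝ) with hsgb
    have habs_sga : ‖sga‖ = 1 := by
      rw [hsga]
      split_ifs with h
      · simp
      · rw [norm_div, Complex.norm_real, Real.norm_eq_abs, abs_of_nonneg (norm_nonneg _),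
          div_self (norm_ne_zero_iff.2 h)]
    have habs_sgb : ‖sgb‖ = 1 := by
      rw [hsgb]
      split_ifs with h
      · simp
      · rw [norm_div, Complex.norm_real, Real.norm_eq_abs, abs_of_nonneg (norm_nonneg _),
          div_self (norm_ne_zero_iff.2 h)]
    have hsga_mul : sga * ((‖α‖ : ℝ) : ℂ) = α := by
      rw [hsga]
      split_ifs with h
      · simp [h]
      · have hne : ((‖α‖ : ℝ) : ℂ) ≠ 0 := by
          exact_mod_cast (norm_pos_iff.2 h).ne'
        field_simp
    have hsgb_mul : (starRingEnd ℂ) sgb * β = ((‖β‖ : ℝ) : ℂ) := by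
      rw [hsgb]
      split_ifs with h
      · simp [h]
      · rw [map_div₀, Complex.conj_ofReal, div_mul_eq_mul_div]
        have hcz : (starRingEnd ℂ) β * β = ((‖β‖ : ℝ) : ℂ) ^ 2 := by
          rw [mul_comm, Complex.mul_conj, ← Complex.sq_norm]
          push_cast
          ring
        rw [hcz]
        have hne : ((‖β‖ : ℝ) : ℂ) ≠ 0 := by
          exact_mod_cast (norm_pos_iff.2 h).ne'
        field_simp
    set b : ℂ := (s : ℂ) * ((starRingEnd ℂ) sga * sgb) with hbdef
    have habs_b : ‖b‖ = s := by
      rw [hbdef, norm_mul, norm_mul, Complex.norm_real, Real.norm_eq_abs, Complex.norm_conj, habs_sga, habs_sgb,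
        abs_of_nonneg hsnn]
      ring
    have hconjb : (starRingEnd ℂ) b = (s : ℂ) * (sga * (starRingEnd ℂ) sgb) := by
      rw [hbdef, map_mul, map_mul, Complex.conj_ofReal, Complex.conj_conj]
    set y : H := (starRingEnd ℂ) q • u + b • p with hy
    have hRy : R y = (starRingEnd ℂ) q • R u + b • R p := by
      rw [hy, map_add, map_smul, map_smul]
    have hpu : (⟪R p, R u⟫_ℂ) = 0 := by
      rw [← inner_conj_symm, hup, map_zero]
    have huu : (⟪R u, R u⟫_ℂ) = 1 := by
      rw [inner_self_eq_norm_sq_to_K, hu]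
      norm_num
    have hynorm : ‖R y‖ = 1 := by
      have hcross : (⟪(starRingEnd ℂ) q • R u, b • R p⟫_ℂ) = 0 := by
        rw [inner_smul_left, inner_smul_right, hup]
        ring
      have h1 : ‖R y‖ ^ 2 = ‖(starRingEnd ℂ) q • R u‖ ^ 2 +
          2 * RCLike.re (⟪(starRingEnd ℂ) q • R u, b • R p⟫_ℂ) + ‖b • R p‖ ^ 2 := by
        rw [hRy]
        exact norm_add_sq _ _
      rw [hcross] at h1
      simp only [map_zero, mul_zero, add_zero] at h1
      have h2 : ‖(starRingEnd ℂ) q • R u‖ = ‖q‖ := by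
        rw [norm_smul, hu, mul_one]
        exact Complex.norm_conj q
      have h3 : ‖b • R p‖ = s := by
        rw [norm_smul, hp, mul_one]
        exact habs_b
      rw [h2, h3] at h1
      have h4 : ‖R y‖ ^ 2 = 1 := by rw [h1]; linarith
      nlinarith [norm_nonneg (R y)]
    have hsipuy : sipA A u y = q := by
      rw [hsip, hRy, inner_add_left, inner_smul_left, inner_smul_left, huu, hpu]
      simp
    have hsipTy : sipA A (T u) y =
        sga * (((‖α‖ : ℝ) : ℂ) + (s : ℂ) * ((‖β‖ : ℝ) : ℂ)) := by
      rw [hsip, hRy, inner_add_left, inner_smul_left, inner_smul_left,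
        ← hsip, ← hsip, ← hβ, Complex.conj_conj, hconjb]
      have h5 : (s : ℂ) * (sga * (starRingEnd ℂ) sgb) * β =
          (s : ℂ) * (sga * ((‖β‖ : ℝ) : ℂ)) := by
        rw [mul_assoc, mul_assoc, hsgb_mul]
      rw [h5, ← hα]
      linear_combination -hsga_mul
    have hzmem : sipA A (T u) y ∈ WqA A q T :=
      ⟨u, y, by rw [hnorm]; exact hu, by rw [hnorm]; exact hynorm, hsipuy, rfl⟩
    have hle : ‖sipA A (T u) y‖ ≤ wqA A q T := le_csSup hWbdd ⟨_, hzmem, rfl⟩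
    have habsz : ‖sipA A (T u) y‖ = ‖α‖ + s * ‖β‖ := by
      rw [hsipTy, norm_mul, habs_sga, one_mul]
      have h6 : ((‖α‖ : ℝ) : ℂ) + (s : ℂ) * ((‖β‖ : ℝ) : ℂ) =
          (((‖α‖ + s * ‖β‖ : ℝ)) : ℂ) := by push_cast; ring
      rw [h6, Complex.norm_real, Real.norm_eq_abs, abs_of_nonneg (by positivity)]
    have hfin : ‖α‖ ≤ wqA A q T := by
      rw [habsz] at hle
      nlinarith [norm_nonneg β]
    calc ‖q‖ * ‖sipA A (T u) u‖ = ‖α‖ := by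
          rw [hα, norm_mul]
      _ ≤ wqA A q T := hfin
  rcases eq_or_ne q 0 with rfl | hq0
  · simpa using hwnn
  · have hqpos : 0 < ‖q‖ := norm_pos_iff.2 hq0
    have hwAle : wA ≤ wqA A q T / ‖q‖ := by
      apply Real.sSup_le _ (div_nonneg hwnn hqpos.le)
      rintro r ⟨u, hu, rfl⟩
      simp only [Set.mem_setOf_eq] at hu
      rw [le_div_iff₀ hqpos, mul_comm]
      exact hmain2 u hu
    have hop : opNormA A T ≤ wqA A q T / ‖q‖ := by
      apply Real.sSup_le _ (div_nonneg hwnn hqpos.le)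
      rintro r ⟨x, hx, rfl⟩
      simp only [Set.mem_setOf_eq, hnorm] at hx ⊢
      calc ‖R (T x)‖ ≤ wA := hw_le x hx
        _ ≤ wqA A q T / ‖q‖ := hwAle
    calc ‖q‖ * opNormA A T ≤ ‖q‖ * (wqA A q T / ‖q‖) :=
        mul_le_mul_of_nonneg_left hop hqpos.le
      _ = wqA A q T := by field_simp
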